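/- Let b ≥ 2 be an integer. The 2b polynomials p_1, ..., p_{2b} ∈ F_q(x_1, ..., x_{2b-1})[x], where p_i(x) = (x - x_i)^{2b-1} for i ∈ [2b-1] and p_{2b}(x) = ∏_{i=1}^{2b-1}(x - x_i), are linearly dependent over F_q(x_1, ..., x_{2b-1}), for any finite field F_q. -/

import Mathlib

open Polynomial in
lemma aux_det_alt_odd {K : Type*} [Field K] {n : ℕ} (hn : Odd n)
    (M : Matrix (Fin n) (Fin n) K) (hskew : ∀ i j, M i j = - M j i)
    (hdiag : ∀ i, M i i = 0) : M.det = 0 := by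
  haveI : Fact (Nat.Prime 2) := ⟨Nat.prime_two⟩
  rw [Matrix.det_apply]
  apply Finset.sum_ninvolution (fun σ => σ⁻¹)
  · intro σ
    have h1 : ∏ i, M (σ⁻¹ i) i = - ∏ i, M (σ i) i := by
      rw [← Equiv.prod_comp σ (fun i => M (σ⁻¹ i) i)]
      simp only [Equiv.Perm.inv_def, Equiv.symm_apply_apply]
      calc ∏ i, M i (σ i) = ∏ i, (-1) * M (σ i) i := by
            exact Finset.prod_congr rfl fun i _ => by rw [hskew i (σ i)]; ring
        _ = (-1 : K) ^ (Fintype.card (Fin n)) * ∏ i, M (σ i) i := by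
            rw [Finset.prod_mul_distrib, Finset.prod_const, Finset.card_univ]
        _ = - ∏ i, M (σ i) i := by
            rw [Fintype.card_fin, Odd.neg_one_pow hn, neg_one_mul]
    rw [Equiv.Perm.sign_inv, h1, smul_neg, add_neg_cancel]
  · intro σ hσne
    intro h
    have hσ2 : σ ^ (2 : ℕ) ^ (1 : ℕ) = 1 := by
      have : σ * σ = 1 := by
        nth_rewrite 1 [← h]
        exact inv_mul_cancel σ
      simpa [pow_succ, pow_one, sq] using this
    have hcard : ¬ (2 ∣ Fintype.card (Fin n)) := by
      rw [Fintype.card_fin]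
      obtain ⟨k, hk⟩ := hn
      omega
    obtain ⟨a, ha⟩ := Equiv.Perm.exists_fixed_point_of_prime hcard hσ2
    apply hσne
    have : ∏ i, M (σ i) i = 0 :=
      Finset.prod_eq_zero (Finset.mem_univ a) (by rw [ha, hdiag])
    rw [this, smul_zero]
  · intro σ; exact Finset.mem_univ _
  · intro σ; exact inv_inv σ

open Polynomial in
lemma aux_dep_exists {K : Type*} [Field K] {n : ℕ} (hn : Odd n)
    (y : Fin n → K) (hy : Function.Injective y) :
    ∃ c : Fin n → K, c ≠ 0 ∧
      ∑ i, Polynomial.C (c i) * (Polynomial.X - Polynomial.C (y i)) ^ n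
        = Polynomial.C (∑ i, c i) * ∏ j, (Polynomial.X - Polynomial.C (y j)) := by
  classical
  have hn0 : n ≠ 0 := hn.pos.ne'
  set M : Matrix (Fin n) (Fin n) K := fun j i => (y j - y i) ^ n with hM
  have hdet : M.det = 0 := by
    apply aux_det_alt_odd hn
    · intro i j
      simp only [hM]
      rw [← neg_sub (y j) (y i), Odd.neg_pow hn]
    · intro i; simp [hM, zero_pow hn0]
  obtain ⟨c, hc0, hMc⟩ := Matrix.exists_mulVec_eq_zero_iff.mpr hdet
  refine ⟨c, hc0, ?_⟩
  set Q : K[X] := ∏ j, (X - C (y j)) with hQ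
  set S : K[X] := (∑ i, C (c i) * (X - C (y i)) ^ n) - C (∑ i, c i) * Q with hS
  have hQmonic : Q.Monic := monic_prod_of_monic _ _ fun j _ => monic_X_sub_C (y j)
  have hQdeg : Q.degree = (n : WithBot ℕ) := by
    rw [hQ, degree_prod]
    simp [degree_X_sub_C]
  have hSalt : S = ∑ i, C (c i) * ((X - C (y i)) ^ n - Q) := by
    rw [hS]
    rw [Finset.sum_congr rfl (fun i _ => mul_sub (C (c i)) ((X - C (y i)) ^ n) Q)]
    rw [Finset.sum_sub_distrib, ← Finset.sum_mul, ← map_sum]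
  have hdeg : S.degree < (n : WithBot ℕ) := by
    rw [hSalt]
    refine lt_of_le_of_lt (Polynomial.degree_sum_le _ _) ?_
    rw [Finset.sup_lt_iff (by exact_mod_cast WithBot.bot_lt_coe n)]
    intro i _
    rw [← smul_eq_C_mul]
    refine lt_of_le_of_lt (degree_smul_le _ _) ?_
    have hmono : ((X - C (y i)) ^ n).Monic := (monic_X_sub_C (y i)).pow n
    have hd : ((X - C (y i)) ^ n).degree = (n : WithBot ℕ) := by
      rw [degree_pow, degree_X_sub_C]; simp
    have := Polynomial.degree_sub_lt (hd.trans hQdeg.symm) (hmono.ne_zero)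
      (by rw [hmono.leadingCoeff, hQmonic.leadingCoeff])
    rwa [hd] at this
  have hSzero : S = 0 := by
    by_cases h0 : S = 0
    · exact h0
    · apply Polynomial.eq_zero_of_natDegree_lt_card_of_eval_eq_zero S hy
      · intro j
        have hQeval : Q.eval (y j) = 0 := by
          rw [hQ, eval_prod]
          exact Finset.prod_eq_zero (Finset.mem_univ j) (by simp)
        have h3 : ∑ i, M j i * c i = 0 := congrFun hMc j
        rw [hS]
        simp only [eval_sub, eval_mul, eval_C, eval_finset_sum, eval_pow, eval_sub, eval_X,
          hQeval, mul_zero, sub_zero]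
        rw [← h3]
        exact Finset.sum_congr rfl fun i _ => by rw [hM]; ring
      · rw [Fintype.card_fin]
        exact (Polynomial.natDegree_lt_iff_degree_lt h0).mpr hdeg
  rw [hS] at hSzero
  exact sub_eq_zero.mp hSzero
  


set_option maxHeartbeats 1000000 in
set_option synthInstance.maxHeartbeats 400000 in
open Polynomial in
/-- Let `b ≥ 2`.  The `2b` polynomials `p_1, ..., p_{2b}` in
`F_q(x_1, ..., x_{2b-1})[x]`, where `p_i(x) = (x - x_i)^{2b-1}` for `i ∈ [2b-1]` and
`p_{2b}(x) = ∏_{i=1}^{2b-1} (x - x_i)`, are linearly dependent over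
`F_q(x_1, ..., x_{2b-1})`, for any finite field `F_q`. -/
theorem stmt_12 (F : Type) [Field F] [Fintype F] (b : ℕ) (hb : 2 ≤ b) :
    ¬ LinearIndependent (FractionRing (MvPolynomial (Fin (2 * b - 1)) F))
      (fun i : Fin (2 * b) =>
        if h : i.val < 2 * b - 1 then
          (Polynomial.X - Polynomial.C (algebraMap (MvPolynomial (Fin (2 * b - 1)) F)
            (FractionRing (MvPolynomial (Fin (2 * b - 1)) F))
            (MvPolynomial.X ⟨i.val, h⟩))) ^ (2 * b - 1)
        else
          ∏ j : Fin (2 * b - 1),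
            (Polynomial.X - Polynomial.C (algebraMap (MvPolynomial (Fin (2 * b - 1)) F)
              (FractionRing (MvPolynomial (Fin (2 * b - 1)) F)) (MvPolynomial.X j)))) := by
  classical
  intro hLI
  set R := MvPolynomial (Fin (2 * b - 1)) F with hR
  set K := FractionRing R with hK
  set y : Fin (2 * b - 1) → K := fun j => algebraMap R K (MvPolynomial.X j) with hy
  have hyinj : Function.Injective y := fun a a' h =>
    MvPolynomial.X_injective (IsFractionRing.injective R K h)
  have hodd : Odd (2 * b - 1) := ⟨b - 1, by omega⟩
  obtain ⟨c, hc0, hid⟩ := aux_dep_exists hodd y hyinj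
  rw [Fintype.linearIndependent_iff] at hLI
  set Q : K[X] := ∏ j : Fin (2 * b - 1), (X - C (y j)) with hQ
  set g : Fin (2 * b) → K := fun i =>
    if h : i.val < 2 * b - 1 then c ⟨i.val, h⟩ else -(∑ j, c j) with hg
  set Fnat : ℕ → K[X] := fun k =>
    if h : k < 2 * b - 1 then c ⟨k, h⟩ • (X - C (y ⟨k, h⟩)) ^ (2 * b - 1)
    else (-(∑ j, c j)) • Q with hF
  have hsum : ∑ i : Fin (2 * b), g i •
      (if h : i.val < 2 * b - 1 then
          (X - C (algebraMap R K (MvPolynomial.X (⟨i.val, h⟩ : Fin (2 * b - 1))))) ^ (2 * b - 1)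
        else ∏ j : Fin (2 * b - 1), (X - C (algebraMap R K (MvPolynomial.X j)))) = 0 := by
    have step1 : ∀ i : Fin (2 * b), g i •
        (if h : i.val < 2 * b - 1 then
            (X - C (algebraMap R K (MvPolynomial.X (⟨i.val, h⟩ : Fin (2 * b - 1))))) ^ (2 * b - 1)
          else ∏ j : Fin (2 * b - 1), (X - C (algebraMap R K (MvPolynomial.X j)))) = Fnat i.val := by
      intro i
      by_cases h : i.val < 2 * b - 1 <;> simp [hF, hg, hy, hQ, h]
    rw [Finset.sum_congr rfl (fun i _ => step1 i), Fin.sum_univ_eq_sum_range]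
    have h2b : Finset.range (2 * b) = Finset.range ((2 * b - 1) + 1) := by
      rw [show 2 * b - 1 + 1 = 2 * b by omega]
    rw [h2b, Finset.sum_range_succ]
    have hlastF : Fnat (2 * b - 1) = (-(∑ j, c j)) • Q := by
      rw [hF]; exact dif_neg (lt_irrefl _)
    have hrange : ∑ k ∈ Finset.range (2 * b - 1), Fnat k
        = ∑ j : Fin (2 * b - 1), c j • (X - C (y j)) ^ (2 * b - 1) := by
      rw [← Fin.sum_univ_eq_sum_range]
      refine Finset.sum_congr rfl fun j _ => ?_
      rw [hF]
      simp [j.isLt]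
    rw [hlastF, hrange]
    simp only [smul_eq_C_mul] at hid ⊢
    rw [hid, C_neg]
    ring
  obtain ⟨j, hj⟩ := Function.ne_iff.mp hc0
  have := hLI g hsum ⟨j.val, by omega⟩
  rw [hg] at this
  simp only [dif_pos j.isLt, Fin.eta] at this
  exact hj this
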